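/- For every r ∈ (r_min, |μ|], the set of minimal directions ubar Λ_r := argmin_{|ℓ|=1} I(rℓ) contains exactly one element. -/

import Mathlib

open MeasureTheory Set Filter
open scoped ENNReal NNReal RealInnerProductSpace Topology

noncomputable section

/-- The plane `ℝ²`. -/
abbrev E2 : Type := EuclideanSpace ℝ (Fin 2)

/-- The Laplace transform `𝓛(u) = 𝔼 e^{u·X₁}` of the random vector `X1`. -/
def lapT {Ω : Type*} [MeasurableSpace Ω] (P : Measure Ω) (X1 : Ω → E2) (u : E2) : ℝ :=
  ∫ ω, Real.exp ⟪u, X1 ω⟫ ∂P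

/-- The cumulant generating function `K(u) = log 𝓛(u)`. -/
def cgfT {Ω : Type*} [MeasurableSpace Ω] (P : Measure Ω) (X1 : Ω → E2) (u : E2) : ℝ :=
  Real.log (lapT P X1 u)

/-- The rate function `I = K*`, the Legendre–Fenchel conjugate of `K`.
Since `I ≥ 0` (the value `0 = 0·v - K(0)` is always attained in the supremum),
we may record it as an `ℝ≥0∞`-valued supremum, clamping negatives to `0`. -/
def rateI {Ω : Type*} [MeasurableSpace Ω] (P : Measure Ω) (X1 : Ω → E2) (v : E2) : ℝ≥0∞ :=
  ⨆ u : E2, ENNReal.ofReal (⟪u, v⟫ - cgfT P X1 u)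

/-- The radial minimum function `ubar I (r) = inf_{|ℓ|=1} I(rℓ)`, `+∞` for `r < 0`. -/
def radMin {Ω : Type*} [MeasurableSpace Ω] (P : Measure Ω) (X1 : Ω → E2) (r : ℝ) : ℝ≥0∞ :=
  if r < 0 then ⊤ else ⨅ ℓ ∈ {ℓ : E2 | ‖ℓ‖ = 1}, rateI P X1 (r • ℓ)

/-- The set of minimal directions `ubar Λ_r = argmin_{|ℓ|=1} I(rℓ)`. -/
def minDirs {Ω : Type*} [MeasurableSpace Ω] (P : Measure Ω) (X1 : Ω → E2) (r : ℝ) : Set E2 :=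
  {ℓ : E2 | ‖ℓ‖ = 1 ∧ ∀ ℓ' : E2, ‖ℓ'‖ = 1 → rateI P X1 (r • ℓ) ≤ rateI P X1 (r • ℓ')}

/-- The topological support of a measure on `ℝ²`: the points all of whose open
neighbourhoods have positive measure. -/
def msupp (ν : Measure E2) : Set E2 := {x | ∀ U : Set E2, IsOpen U → x ∈ U → 0 < ν U}

/-- The mean `μ = 𝔼 X₁`. -/
def meanv {Ω : Type*} [MeasurableSpace Ω] (P : Measure Ω) (X1 : Ω → E2) : E2 :=
  ∫ ω, X1 ω ∂P

/-- `r_min = min { |x| : x ∈ conv (supp X₁) }`. -/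
def rmin {Ω : Type*} [MeasurableSpace Ω] (P : Measure Ω) (X1 : Ω → E2) : ℝ :=
  sInf (norm '' (convexHull ℝ (msupp (P.map X1))))

/-- `r_max = max { |x| : x ∈ supp X₁ }`, as an element of `[0,∞]` (possibly `∞`). -/
def rmaxE {Ω : Type*} [MeasurableSpace Ω] (P : Measure Ω) (X1 : Ω → E2) : ℝ≥0∞ :=
  ⨆ y ∈ msupp (P.map X1), (‖y‖₊ : ℝ≥0∞)

/-- Convexity of an `[0,∞]`-valued function on a subset of `ℝ`. -/
def ENNConvexOn (s : Set ℝ) (g : ℝ → ℝ≥0∞) : Prop :=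
  ∀ ⦃x⦄, x ∈ s → ∀ ⦃y⦄, y ∈ s → ∀ a b : ℝ≥0, a + b = 1 →
    g ((a : ℝ) * x + (b : ℝ) * y) ≤ (a : ℝ≥0∞) * g x + (b : ℝ≥0∞) * g y

/-- The largest convex minorant of an `[0,∞]`-valued function on `ℝ`. -/
def convMin (g : ℝ → ℝ≥0∞) (x : ℝ) : ℝ≥0∞ :=
  ⨆ h ∈ {h : ℝ → ℝ≥0∞ | ENNConvexOn Set.univ h ∧ ∀ y, h y ≤ g y}, h x

/-! ### Auxiliary lemmas -/

section Aux

set_option linter.unusedSectionVars false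

lemma abs_le_exp_add (t : ℝ) : |t| ≤ Real.exp t + Real.exp (-t) := by
  rcases abs_cases t with ⟨h, _⟩ | ⟨h, _⟩
  · rw [h]
    have := Real.add_one_le_exp t
    have := (Real.exp_pos (-t)).le
    linarith
  · rw [h]
    have := Real.add_one_le_exp (-t)
    have := (Real.exp_pos t).le
    linarith

lemma E2_norm_le (x : E2) : ‖x‖ ≤ |x 0| + |x 1| := by
  rw [EuclideanSpace.norm_eq]
  rw [Fin.sum_univ_two]
  have h : ‖x 0‖^2 + ‖x 1‖^2 ≤ (|x 0| + |x 1|)^2 := by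
    simp only [Real.norm_eq_abs]
    nlinarith [abs_nonneg (x 0), abs_nonneg (x 1)]
  calc Real.sqrt (‖x 0‖^2 + ‖x 1‖^2) ≤ Real.sqrt ((|x 0| + |x 1|)^2) := Real.sqrt_le_sqrt h
  _ = |x 0| + |x 1| := Real.sqrt_sq (by positivity)

lemma abs_exp_sub_one_le' (a : ℝ) : |Real.exp a - 1| ≤ |a| * Real.exp |a| := by
  rcases le_or_gt 0 a with h | h
  · rw [abs_of_nonneg h, abs_of_nonneg (by linarith [Real.one_le_exp h] : (0:ℝ) ≤ Real.exp a - 1)]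
    have h1 : 1 - a ≤ Real.exp (-a) := by linarith [Real.add_one_le_exp (-a)]
    have h2 : Real.exp a * (1 - a) ≤ Real.exp a * Real.exp (-a) :=
      mul_le_mul_of_nonneg_left h1 (Real.exp_pos a).le
    rw [← Real.exp_add] at h2
    simp at h2
    nlinarith
  · rw [abs_of_neg h, abs_of_nonpos (by linarith [Real.exp_lt_one_iff.2 h] : Real.exp a - 1 ≤ 0)]
    have h1 : 1 - Real.exp a ≤ -a := by linarith [Real.add_one_le_exp a]
    have h2 : (1:ℝ) ≤ Real.exp (-a) := Real.one_le_exp (by linarith)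
    nlinarith

lemma abs_div_exp_bound {y t : ℝ} (ht : 0 < t) (ht1 : t ≤ 1) :
    |(Real.exp (t * y) - 1) / t| ≤ Real.exp (2 * y) + Real.exp (-(2 * y)) := by
  have h1 : |(Real.exp (t * y) - 1) / t| = |Real.exp (t * y) - 1| / t := by
    rw [abs_div, abs_of_pos ht]
  rw [h1]
  have h2 : |Real.exp (t * y) - 1| ≤ (t * |y|) * Real.exp (t * |y|) := by
    have := abs_exp_sub_one_le' (t * y)
    rwa [abs_mul, abs_of_pos ht] at this
  have h3 : Real.exp (t * |y|) ≤ Real.exp |y| := by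
    apply Real.exp_le_exp.2
    nlinarith [abs_nonneg y]
  have h4 : |Real.exp (t * y) - 1| / t ≤ |y| * Real.exp |y| := by
    rw [div_le_iff₀ ht]
    calc |Real.exp (t * y) - 1| ≤ (t * |y|) * Real.exp (t * |y|) := h2
    _ ≤ (t * |y|) * Real.exp |y| := by
        apply mul_le_mul_of_nonneg_left h3 (by positivity)
    _ = |y| * Real.exp |y| * t := by ring
  refine h4.trans ?_
  have h5 : |y| ≤ Real.exp |y| := by linarith [Real.add_one_le_exp |y|, abs_nonneg y]
  have h6 : |y| * Real.exp |y| ≤ Real.exp |y| * Real.exp |y| :=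
    mul_le_mul_of_nonneg_right h5 (Real.exp_pos _).le
  rw [← Real.exp_add] at h6
  refine h6.trans ?_
  rcases abs_cases y with ⟨hy, _⟩ | ⟨hy, _⟩
  · rw [hy]
    have : Real.exp (y + y) = Real.exp (2 * y) := by ring_nf
    rw [this]
    linarith [(Real.exp_pos (-(2*y))).le]
  · rw [hy]
    have : Real.exp (-y + -y) = Real.exp (-(2 * y)) := by ring_nf
    rw [this]
    linarith [(Real.exp_pos (2*y)).le]

lemma tendsto_exp_slope (y : ℝ) :
    Tendsto (fun t => (Real.exp (t * y) - 1) / t) (𝓝[>] (0:ℝ)) (𝓝 y) := by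
  have hd : HasDerivAt (fun t : ℝ => Real.exp (t * y)) y 0 := by
    have h1 : HasDerivAt (fun t : ℝ => t * y) y 0 := by
      simpa using (hasDerivAt_id (0:ℝ)).mul_const y
    have h2 := h1.exp
    simpa using h2
  have h2 := hasDerivAt_iff_tendsto_slope.1 hd
  have h3 : Tendsto (slope (fun t : ℝ => Real.exp (t * y)) 0) (𝓝[>] (0:ℝ)) (𝓝 y) :=
    h2.mono_left (nhdsWithin_mono 0 (fun t ht => ne_of_gt ht))
  refine h3.congr' ?_
  filter_upwards [self_mem_nhdsWithin] with t ht
  have ht' : (0:ℝ) < t := ht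
  rw [slope_def_field]
  simp

/-- conditional barycenter of `X1` over the event `A`. -/
def condMean {Ω : Type*} [MeasurableSpace Ω] (P : Measure Ω) (X1 : Ω → E2) (A : Set Ω) : E2 :=
  ((P A).toReal)⁻¹ • ∫ ω in A, X1 ω ∂P

variable {Ω : Type*} [MeasurableSpace Ω] (P : Measure Ω) [IsProbabilityMeasure P]
  (X1 : Ω → E2)

lemma meas_inner (hX : Measurable X1) (u : E2) : Measurable (fun ω => (⟪u, X1 ω⟫ : ℝ)) :=
  (continuous_const.inner continuous_id).measurable.comp hX

lemma integrable_inner' (hX : Measurable X1)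
    (hLap : ∀ u : E2, Integrable (fun ω => Real.exp ⟪u, X1 ω⟫) P) (u : E2) :
    Integrable (fun ω => (⟪u, X1 ω⟫ : ℝ)) P := by
  refine Integrable.mono' ((hLap u).add (hLap (-u))) ((meas_inner X1 hX u).aestronglyMeasurable) ?_
  filter_upwards with ω
  have h1 : (⟪-u, X1 ω⟫ : ℝ) = -⟪u, X1 ω⟫ := by rw [inner_neg_left]
  simp only [Pi.add_apply, Real.norm_eq_abs, h1]
  exact abs_le_exp_add _

lemma integrable_X (hX : Measurable X1)
    (hLap : ∀ u : E2, Integrable (fun ω => Real.exp ⟪u, X1 ω⟫) P) :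
    Integrable X1 P := by
  classical
  set e : Fin 2 → E2 := fun i => EuclideanSpace.single i (1:ℝ) with he
  have h1 : ∀ (i : Fin 2) (x : E2), (⟪e i, x⟫ : ℝ) = x i := by
    intro i x
    simp [he, EuclideanSpace.inner_single_left]
  have hint : Integrable (fun ω => |⟪e 0, X1 ω⟫| + |⟪e 1, X1 ω⟫|) P :=
    ((integrable_inner' P X1 hX hLap (e 0)).abs).add ((integrable_inner' P X1 hX hLap (e 1)).abs)
  refine Integrable.mono' hint hX.aestronglyMeasurable ?_
  filter_upwards with ω
  rw [h1, h1]
  exact E2_norm_le (X1 ω)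

open ProbabilityTheory in
lemma exp_inner_condMean_le (hX : Measurable X1)
    (hXint : Integrable X1 P)
    (hLap : ∀ u : E2, Integrable (fun ω => Real.exp ⟪u, X1 ω⟫) P)
    (hIin : ∀ u : E2, Integrable (fun ω => (⟪u, X1 ω⟫:ℝ)) P)
    {A : Set Ω} (hA : MeasurableSet A) (h0 : P A ≠ 0) (u : E2) :
    (P A).toReal * Real.exp (⟪u, condMean P X1 A⟫ : ℝ) ≤ lapT P X1 u := by
  have hfin : P A ≠ ⊤ := measure_ne_top P A
  set Q : Measure Ω := P[|A] with hQ
  have hQP : IsProbabilityMeasure Q := cond_isProbabilityMeasure h0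
  have hsmul : Q = (P A)⁻¹ • P.restrict A := rfl
  have hinv_ne_top : (P A)⁻¹ ≠ ⊤ := by
    simpa using h0
  have hXQ : Integrable X1 Q := by
    rw [hsmul]
    exact (hXint.restrict).smul_measure hinv_ne_top
  have hYQ : Integrable (fun ω => (⟪u, X1 ω⟫:ℝ)) Q := by
    rw [hsmul]
    exact ((hIin u).restrict).smul_measure hinv_ne_top
  have hEYQ : Integrable (fun ω => Real.exp (⟪u, X1 ω⟫:ℝ)) Q := by
    rw [hsmul]
    exact ((hLap u).restrict).smul_measure hinv_ne_top
  have hmean : ∫ ω, X1 ω ∂Q = condMean P X1 A := by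
    rw [hsmul, integral_smul_measure, condMean, ENNReal.toReal_inv]
  have hjen : Real.exp (∫ ω, (⟪u, X1 ω⟫:ℝ) ∂Q) ≤ ∫ ω, Real.exp (⟪u, X1 ω⟫:ℝ) ∂Q := by
    have := convexOn_exp.map_integral_le (Real.continuous_exp.continuousOn)
      isClosed_univ (by filter_upwards with ω using mem_univ _) hYQ (by exact hEYQ)
    exact this
  have hinner : ∫ ω, (⟪u, X1 ω⟫:ℝ) ∂Q = ⟪u, condMean P X1 A⟫ := by
    rw [← hmean, ← integral_inner hXQ]
  have hupper : ∫ ω, Real.exp (⟪u, X1 ω⟫:ℝ) ∂Q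
      = (P A).toReal⁻¹ * ∫ ω in A, Real.exp (⟪u, X1 ω⟫:ℝ) ∂P := by
    rw [hsmul, integral_smul_measure, ENNReal.toReal_inv, smul_eq_mul]
  have hle : ∫ ω in A, Real.exp (⟪u, X1 ω⟫:ℝ) ∂P ≤ lapT P X1 u :=
    setIntegral_le_integral (hLap u) (Eventually.of_forall fun ω => (Real.exp_pos _).le)
  have hpos : 0 < (P A).toReal := ENNReal.toReal_pos h0 hfin
  rw [hinner] at hjen
  have h2 : ∫ ω, Real.exp (⟪u, X1 ω⟫:ℝ) ∂Q ≤ (P A).toReal⁻¹ * lapT P X1 u := by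
    rw [hupper]
    exact mul_le_mul_of_nonneg_left hle (by positivity)
  have h3 := hjen.trans h2
  calc (P A).toReal * Real.exp (⟪u, condMean P X1 A⟫:ℝ)
      ≤ (P A).toReal * ((P A).toReal⁻¹ * lapT P X1 u) :=
        mul_le_mul_of_nonneg_left h3 hpos.le
  _ = lapT P X1 u := by field_simp

variable (hX : Measurable X1)
    (hXint : Integrable X1 P)
    (hLap : ∀ u : E2, Integrable (fun ω => Real.exp ⟪u, X1 ω⟫) P)
    (hIin : ∀ u : E2, Integrable (fun ω => (⟪u, X1 ω⟫:ℝ)) P)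

include hX hXint hLap hIin

lemma condMean_key {A : Set Ω} (hA : MeasurableSet A) (h0 : P A ≠ 0) (u : E2) :
    (⟪u, condMean P X1 A⟫ : ℝ) - cgfT P X1 u ≤ - Real.log (P A).toReal := by
  have h := exp_inner_condMean_le P X1 hX hXint hLap hIin hA h0 u
  have hpos : 0 < (P A).toReal := ENNReal.toReal_pos h0 (measure_ne_top P A)
  have hlpos : 0 < (P A).toReal * Real.exp (⟪u, condMean P X1 A⟫ : ℝ) := by positivity
  have := Real.log_le_log hlpos h
  rw [Real.log_mul hpos.ne' (Real.exp_pos _).ne', Real.log_exp] at this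
  rw [cgfT]
  linarith

omit hX hXint hLap hIin in
lemma condMean_univ : condMean P X1 univ = meanv P X1 := by
  rw [condMean, meanv, measure_univ, ENNReal.toReal_one, inv_one, one_smul,
    setIntegral_univ]

lemma mean_key (u : E2) : (⟪u, meanv P X1⟫ : ℝ) - cgfT P X1 u ≤ 0 := by
  have := condMean_key P X1 hX hXint hLap hIin MeasurableSet.univ
    (by simp) u
  rw [condMean_univ] at this
  rw [measure_univ, ENNReal.toReal_one, Real.log_one, neg_zero] at this
  exact this

lemma rateI_mean : rateI P X1 (meanv P X1) = 0 := by
  rw [rateI]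
  refine le_antisymm (iSup_le fun u => ?_) zero_le
  exact le_of_eq (ENNReal.ofReal_eq_zero.2 (mean_key P X1 hX hXint hLap hIin u))

lemma lapT_pos (u : E2) : 0 < lapT P X1 u := by
  have h := exp_inner_condMean_le P X1 hX hXint hLap hIin MeasurableSet.univ (by simp) u
  have : (0:ℝ) < (P univ).toReal * Real.exp (⟪u, condMean P X1 univ⟫ : ℝ) := by
    rw [measure_univ, ENNReal.toReal_one, one_mul]; positivity
  linarith

lemma inner_le_mean {v : E2} (hv : ∀ w : E2, (⟪w, v⟫:ℝ) - cgfT P X1 w ≤ 0) (u : E2) :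
    (⟪u, v⟫:ℝ) ≤ ⟪u, meanv P X1⟫ := by
  set Y : Ω → ℝ := fun ω => ⟪u, X1 ω⟫ with hY
  have step1 : ∀ t : ℝ, 0 < t → (⟪u, v⟫:ℝ) ≤ ∫ ω, (Real.exp (t * Y ω) - 1) / t ∂P := by
    intro t ht
    have h1 : (⟪t • u, v⟫:ℝ) ≤ cgfT P X1 (t • u) := by linarith [hv (t • u)]
    have h2 : cgfT P X1 (t • u) ≤ lapT P X1 (t • u) - 1 :=
      Real.log_le_sub_one_of_pos (lapT_pos P X1 hX hXint hLap hIin _)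
    have he : ∀ ω, (⟪t • u, X1 ω⟫:ℝ) = t * Y ω := fun ω => real_inner_smul_left u (X1 ω) t
    have hint : Integrable (fun ω => Real.exp (t * Y ω)) P :=
      (hLap (t • u)).congr (Eventually.of_forall fun ω => congrArg Real.exp (he ω))
    have h3 : lapT P X1 (t • u) - 1 = ∫ ω, (Real.exp (t * Y ω) - 1) ∂P := by
      rw [integral_sub hint (integrable_const 1), integral_const, probReal_univ,
        one_smul]
      congr 1
      rw [lapT]
      exact integral_congr_ae (Eventually.of_forall fun ω => congrArg Real.exp (he ω))
    have h4 : (⟪t • u, v⟫:ℝ) = t * ⟪u, v⟫ := real_inner_smul_left u v t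
    have h5 : t * (⟪u, v⟫:ℝ) ≤ ∫ ω, (Real.exp (t * Y ω) - 1) ∂P := by
      rw [← h4]; linarith
    rw [integral_div]
    rw [le_div_iff₀ ht]
    linarith [h5]
  have step2 : Tendsto (fun t => ∫ ω, (Real.exp (t * Y ω) - 1) / t ∂P) (𝓝[>] (0:ℝ))
      (𝓝 (∫ ω, Y ω ∂P)) := by
    refine tendsto_integral_filter_of_dominated_convergence
      (fun ω => Real.exp (2 * Y ω) + Real.exp (-(2 * Y ω))) ?_ ?_ ?_ ?_
    · filter_upwards with t
      refine (((((meas_inner X1 hX u).const_mul t).exp.sub measurable_const).div_const t)).aestronglyMeasurable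
    · filter_upwards [Ioc_mem_nhdsGT_of_mem (Set.left_mem_Ico.2 one_pos)] with t ht
      filter_upwards with ω
      rw [Real.norm_eq_abs]
      exact abs_div_exp_bound ht.1 ht.2
    · have e1 : ∀ ω, Real.exp (⟪(2:ℝ) • u, X1 ω⟫:ℝ) = Real.exp (2 * Y ω) :=
        fun ω => congrArg Real.exp (real_inner_smul_left u (X1 ω) 2)
      have e2 : ∀ ω, Real.exp (⟪-((2:ℝ) • u), X1 ω⟫:ℝ) = Real.exp (-(2 * Y ω)) := by
        intro ω
        have : (⟪-((2:ℝ) • u), X1 ω⟫:ℝ) = -(2 * Y ω) := by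
          rw [inner_neg_left, real_inner_smul_left]
        exact congrArg Real.exp this
      refine Integrable.add ?_ ?_
      · exact (hLap ((2:ℝ) • u)).congr (Eventually.of_forall fun ω => e1 ω)
      · exact (hLap (-((2:ℝ) • u))).congr (Eventually.of_forall fun ω => e2 ω)
    · filter_upwards with ω
      exact tendsto_exp_slope (Y ω)
  have step3 : ∫ ω, Y ω ∂P = ⟪u, meanv P X1⟫ := by
    rw [hY, meanv, integral_inner hXint]
  rw [← step3]
  refine ge_of_tendsto step2 ?_
  filter_upwards [self_mem_nhdsWithin] with t ht
  exact step1 t ht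

lemma rate_zero_eq_mean {v : E2} (hv : ∀ w : E2, (⟪w, v⟫:ℝ) - cgfT P X1 w ≤ 0) :
    v = meanv P X1 := by
  set μ := meanv P X1
  have h := inner_le_mean P X1 hX hXint hLap hIin hv (v - μ)
  have h2 : (⟪v - μ, v - μ⟫:ℝ) ≤ 0 := by
    rw [inner_sub_right]
    linarith
  have := real_inner_self_nonpos.1 h2
  exact sub_eq_zero.1 this

omit hX hXint hLap hIin in
lemma rate_eq_zero_imp {v : E2} (h : rateI P X1 v = 0) (w : E2) :
    (⟪w, v⟫:ℝ) - cgfT P X1 w ≤ 0 := by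
  have hle : ENNReal.ofReal ((⟪w, v⟫:ℝ) - cgfT P X1 w) ≤ 0 := by
    rw [← h]
    exact le_iSup (fun u => ENNReal.ofReal ((⟪u, v⟫:ℝ) - cgfT P X1 u)) w
  exact ENNReal.ofReal_eq_zero.1 (le_antisymm hle zero_le)

omit hX hXint hLap hIin in
lemma sublevel_closed (r : ℝ) (b : ℝ≥0∞) :
    IsClosed {ℓ : E2 | rateI P X1 (r • ℓ) ≤ b} := by
  have h : {ℓ : E2 | rateI P X1 (r • ℓ) ≤ b}
      = ⋂ u : E2, {ℓ : E2 | ENNReal.ofReal ((⟪u, r • ℓ⟫:ℝ) - cgfT P X1 u) ≤ b} := by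
    ext ℓ
    simp [rateI, iSup_le_iff]
  rw [h]
  refine isClosed_iInter fun u => ?_
  refine isClosed_le ?_ continuous_const
  exact ENNReal.continuous_ofReal.comp
    ((continuous_const.inner (continuous_id.const_smul r)).sub continuous_const)

omit hX hXint hLap hIin in
lemma rate_combo {a b : ℝ} (ha : 0 ≤ a) (hb : 0 ≤ b) (hab : a + b = 1) (x y : E2) :
    rateI P X1 (a • x + b • y)
      ≤ ENNReal.ofReal a * rateI P X1 x + ENNReal.ofReal b * rateI P X1 y := by
  refine iSup_le fun u => ?_
  have h1 : (⟪u, a • x + b • y⟫:ℝ) - cgfT P X1 u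
      = a * ((⟪u, x⟫:ℝ) - cgfT P X1 u) + b * ((⟪u, y⟫:ℝ) - cgfT P X1 u) := by
    rw [inner_add_right, real_inner_smul_right, real_inner_smul_right]
    have hb' : b = 1 - a := by linarith
    rw [hb']
    ring
  rw [h1]
  calc ENNReal.ofReal (a * ((⟪u, x⟫:ℝ) - cgfT P X1 u) + b * ((⟪u, y⟫:ℝ) - cgfT P X1 u))
      ≤ ENNReal.ofReal (a * ((⟪u, x⟫:ℝ) - cgfT P X1 u))
        + ENNReal.ofReal (b * ((⟪u, y⟫:ℝ) - cgfT P X1 u)) := ENNReal.ofReal_add_le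
  _ = ENNReal.ofReal a * ENNReal.ofReal ((⟪u, x⟫:ℝ) - cgfT P X1 u)
        + ENNReal.ofReal b * ENNReal.ofReal ((⟪u, y⟫:ℝ) - cgfT P X1 u) := by
      rw [ENNReal.ofReal_mul ha, ENNReal.ofReal_mul hb]
  _ ≤ ENNReal.ofReal a * rateI P X1 x + ENNReal.ofReal b * rateI P X1 y := by
      refine add_le_add ?_ ?_
      · exact mul_le_mul_of_nonneg_left (le_iSup (fun u => ENNReal.ofReal ((⟪u, x⟫:ℝ) - cgfT P X1 u)) u) zero_le
      · exact mul_le_mul_of_nonneg_left (le_iSup (fun u => ENNReal.ofReal ((⟪u, y⟫:ℝ) - cgfT P X1 u)) u) zero_le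

omit hX hXint hLap hIin in
lemma condMean_close (hXint : Integrable X1 P) {s : E2} {ε : ℝ} (hε : 0 < ε)
    {A : Set Ω} (hAX : A = X1 ⁻¹' Metric.ball s ε) (h0 : P A ≠ 0) :
    ‖condMean P X1 A - s‖ ≤ ε := by
  set p := (P A).toReal with hp
  have hppos : 0 < p := ENNReal.toReal_pos h0 (measure_ne_top _ _)
  have hconst : ∫ _ω in A, s ∂P = p • s := by rw [setIntegral_const]; rfl
  have hsub : condMean P X1 A - s = p⁻¹ • (∫ ω in A, (X1 ω - s) ∂P) := by
    rw [integral_sub hXint.restrict (integrable_const s), hconst, condMean, smul_sub, smul_smul,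
      inv_mul_cancel₀ hppos.ne', one_smul]
  rw [hsub, norm_smul]
  have hb : ‖∫ ω in A, (X1 ω - s) ∂P‖ ≤ ε * p := by
    refine norm_setIntegral_le_of_norm_le_const (measure_lt_top P A) ?_
    · intro x hx
      rw [hAX] at hx
      exact le_of_lt (by simpa [dist_eq_norm] using hx)
  calc ‖p⁻¹‖ * ‖∫ ω in A, (X1 ω - s) ∂P‖ ≤ ‖p⁻¹‖ * (ε * p) := by
        exact mul_le_mul_of_nonneg_left hb (norm_nonneg _)
  _ = ε := by
      rw [Real.norm_eq_abs, abs_of_pos (by positivity)]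
      field_simp

end Aux

lemma msupp_nonempty (ν : Measure E2) [IsProbabilityMeasure ν] : (msupp ν).Nonempty := by
  by_contra h
  rw [not_nonempty_iff_eq_empty] at h
  have h2 : ∀ x : E2, ∃ U : Set E2, IsOpen U ∧ x ∈ U ∧ ν U = 0 := by
    intro x
    have hx : x ∉ msupp ν := h ▸ notMem_empty x
    rw [msupp] at hx
    simp only [Set.mem_setOf_eq] at hx
    push_neg at hx
    obtain ⟨U, hUo, hUx, hU0⟩ := hx
    exact ⟨U, hUo, hUx, le_antisymm hU0 zero_le⟩
  choose U hUo hUx hU0 using h2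
  obtain ⟨T, hTc, hTU⟩ := TopologicalSpace.isOpen_iUnion_countable U hUo
  have huniv : ⋃ x, U x = univ := eq_univ_iff_forall.2 fun x => mem_iUnion.2 ⟨x, hUx x⟩
  have hν : ν univ = 0 := by
    rw [← huniv, ← hTU]
    exact (measure_biUnion_null_iff hTc).2 fun i _ => hU0 i
  rw [measure_univ] at hν
  exact one_ne_zero hν

lemma exists_minOn_sphere (g : E2 → ℝ≥0∞)
    (hclosed : ∀ b : ℝ≥0∞, IsClosed {x : E2 | g x ≤ b})
    (ℓ0 : E2) (h0 : ‖ℓ0‖ = 1) (hfin : g ℓ0 ≠ ⊤) :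
    ∃ ℓ : E2, ‖ℓ‖ = 1 ∧ ∀ ℓ' : E2, ‖ℓ'‖ = 1 → g ℓ ≤ g ℓ' := by
  set S : Set E2 := {x : E2 | ‖x‖ = 1} with hS
  have hS_eq : S = Metric.sphere (0:E2) 1 := by
    ext x; simp [hS, mem_sphere_zero_iff_norm]
  have hS_compact : IsCompact S := hS_eq ▸ isCompact_sphere 0 1
  have hS_closed : IsClosed S := isClosed_eq continuous_norm continuous_const
  set m : ℝ≥0∞ := ⨅ (ℓ : E2) (_ : ‖ℓ‖ = 1), g ℓ with hm
  have hm_le : ∀ ℓ' : E2, ‖ℓ'‖ = 1 → m ≤ g ℓ' := fun ℓ' h' => iInf₂_le ℓ' h'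
  have hm_ne_top : m ≠ ⊤ := fun h => hfin (top_le_iff.1 (h ▸ hm_le ℓ0 h0))
  set ε : ℕ → ℝ≥0∞ := fun n => ((n:ℝ≥0∞) + 1)⁻¹ with hε
  have hε0 : ∀ n, ε n ≠ 0 := by
    intro n
    refine ENNReal.inv_ne_zero.2 ?_
    exact ENNReal.add_ne_top.2 ⟨ENNReal.natCast_ne_top n, ENNReal.one_ne_top⟩
  set C : ℕ → Set E2 := fun n => S ∩ {x : E2 | g x ≤ m + ε n} with hC
  have hC_sub : ∀ n, C (n+1) ⊆ C n := by
    intro n x hx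
    refine ⟨hx.1, le_trans hx.2 (add_le_add (le_refl m) ?_)⟩
    refine ENNReal.inv_le_inv.2 ?_
    push_cast
    exact add_le_add_left (by exact_mod_cast Nat.cast_le.2 (Nat.le_succ n)) 1
  have hC_ne : ∀ n, (C n).Nonempty := by
    intro n
    by_contra h
    rw [not_nonempty_iff_eq_empty] at h
    have hall : ∀ ℓ : E2, ‖ℓ‖ = 1 → m + ε n ≤ g ℓ := by
      intro ℓ hℓ
      by_contra hlt
      push_neg at hlt
      exact (Set.eq_empty_iff_forall_notMem.1 h ℓ) ⟨hℓ, hlt.le⟩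
    have : m + ε n ≤ m := le_iInf₂ hall
    exact absurd this (not_le.2 (ENNReal.lt_add_right hm_ne_top (hε0 n)))
  have hC_closed : ∀ n, IsClosed (C n) := fun n => hS_closed.inter (hclosed _)
  have hC0_compact : IsCompact (C 0) :=
    hS_compact.of_isClosed_subset (hC_closed 0) inter_subset_left
  obtain ⟨ℓ, hℓ⟩ := IsCompact.nonempty_iInter_of_sequence_nonempty_isCompact_isClosed
    C hC_sub hC_ne hC0_compact hC_closed
  simp only [Set.mem_iInter] at hℓ
  have hℓS : ‖ℓ‖ = 1 := (hℓ 0).1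
  have hℓm : g ℓ ≤ m := by
    refine ENNReal.le_of_forall_pos_le_add fun δ hδ _ => ?_
    obtain ⟨n, hn⟩ := ENNReal.exists_inv_nat_lt (by exact_mod_cast hδ.ne' : (δ:ℝ≥0∞) ≠ 0)
    refine le_trans (hℓ n).2 (add_le_add (le_refl m) ?_)
    refine le_trans ?_ hn.le
    exact ENNReal.inv_le_inv.2 le_self_add
  exact ⟨ℓ, hℓS, fun ℓ' h' => hℓm.trans (hm_le ℓ' h')⟩

lemma inner_combo (u x y : E2) (τ cK : ℝ) :
    (⟪u, (1-τ) • x + τ • y⟫:ℝ) - cK = (1-τ) * ((⟪u, x⟫:ℝ) - cK) + τ * ((⟪u, y⟫:ℝ) - cK) := by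
  rw [inner_add_right, real_inner_smul_right, real_inner_smul_right]
  ring

lemma exists_on_circle {x y : E2} {r : ℝ} (hx : ‖x‖ < r) (hy : r ≤ ‖y‖) :
    ∃ τ : ℝ, τ ∈ Icc (0:ℝ) 1 ∧ 0 < τ ∧ ‖(1 - τ) • x + τ • y‖ = r := by
  set φ : ℝ → ℝ := fun τ => ‖(1 - τ) • x + τ • y‖ with hφ
  have hcont : Continuous φ :=
    (((continuous_const.sub continuous_id).smul continuous_const).add
      (continuous_id.smul continuous_const)).norm
  have h0 : φ 0 = ‖x‖ := by simp [hφ]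
  have h1 : φ 1 = ‖y‖ := by simp [hφ]
  have hmem : r ∈ Icc (φ 0) (φ 1) := by
    rw [h0, h1]
    exact ⟨hx.le, hy⟩
  obtain ⟨τ, hτ, hτr⟩ := intermediate_value_Icc zero_le_one hcont.continuousOn hmem
  refine ⟨τ, hτ, ?_, hτr⟩
  rcases eq_or_lt_of_le hτ.1 with h | h
  · exfalso
    rw [← h] at hτr
    rw [h0] at hτr
    exact absurd hτr.symm (ne_of_gt hx)
  · exact h

lemma mid_norm_lt {a c : E2} (ha : ‖a‖ = 1) (hc : ‖c‖ = 1) (hne : a ≠ c) :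
    ‖(1/2 : ℝ) • a + (1/2 : ℝ) • c‖ < 1 := by
  have hsum : (1/2 : ℝ) • a + (1/2 : ℝ) • c = (1/2 : ℝ) • (a + c) := by
    rw [smul_add]
  have hsq : ‖a + c‖^2 = 2 + 2 * ⟪a, c⟫ := by
    rw [norm_add_sq_real, ha, hc]
    ring
  have hsq' : ‖a - c‖^2 = 2 - 2 * ⟪a, c⟫ := by
    rw [norm_sub_sq_real, ha, hc]
    ring
  have hpos : 0 < ‖a - c‖ := norm_pos_iff.2 (sub_ne_zero.2 hne)
  have h4 : ‖a + c‖^2 < 4 := by nlinarith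
  have h2 : ‖a + c‖ < 2 := by nlinarith [norm_nonneg (a + c)]
  rw [hsum, norm_smul, Real.norm_eq_abs]
  rw [abs_of_pos (by norm_num : (0:ℝ) < 1/2)]
  linarith

/-- For every `r ∈ (r_min, |μ|]`, the set of minimal directions
`ubar Λ_r = argmin_{|ℓ|=1} I(rℓ)` contains exactly one element. -/
theorem minDirs_unique
    {Ω : Type*} [MeasurableSpace Ω] (P : Measure Ω) [IsProbabilityMeasure P]
    (X1 : Ω → E2) (hX : Measurable X1)
    (hLap : ∀ u : E2, Integrable (fun ω => Real.exp ⟪u, X1 ω⟫) P)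
    (r : ℝ) (hr : rmin P X1 < r) (hr' : r ≤ ‖meanv P X1‖) :
    ∃! ℓ : E2, ℓ ∈ minDirs P X1 r := by
  classical
  have hXint : Integrable X1 P := integrable_X P X1 hX hLap
  have hIin : ∀ u : E2, Integrable (fun ω => (⟪u, X1 ω⟫:ℝ)) P := integrable_inner' P X1 hX hLap
  set μv : E2 := meanv P X1 with hμv
  have hmean0 : ∀ u : E2, (⟪u, μv⟫:ℝ) - cgfT P X1 u ≤ 0 := mean_key P X1 hX hXint hLap hIin
  have hrate_mean : rateI P X1 μv = 0 := rateI_mean P X1 hX hXint hLap hIin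
  haveI hν : IsProbabilityMeasure (P.map X1) := Measure.isProbabilityMeasure_map hX.aemeasurable
  have hrmin0 : 0 ≤ rmin P X1 := Real.sInf_nonneg (by rintro a ⟨x, -, rfl⟩; exact norm_nonneg x)
  have hrpos : 0 < r := lt_of_le_of_lt hrmin0 hr
  -- find a convex combination of support points of norm < r
  obtain ⟨s0, hs0⟩ := msupp_nonempty (P.map X1)
  have hhull_ne : (norm '' (convexHull ℝ (msupp (P.map X1)))).Nonempty :=
    ⟨‖s0‖, s0, subset_convexHull ℝ _ hs0, rfl⟩
  obtain ⟨a, ⟨x, hxhull, rfl⟩, hax⟩ := exists_lt_of_csInf_lt hhull_ne hr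
  rw [convexHull_eq] at hxhull
  obtain ⟨ι, t, w, z, hw0, hw1, hz, hxc⟩ := hxhull
  set ε : ℝ := (r - ‖x‖) / 2 with hεdef
  have hεpos : 0 < ε := by
    rw [hεdef]
    linarith
  set A : ι → Set Ω := fun i => X1 ⁻¹' Metric.ball (z i) ε with hA
  have hAmeas : ∀ i, MeasurableSet (A i) := fun i => hX measurableSet_ball
  have hA0 : ∀ i ∈ t, P (A i) ≠ 0 := by
    intro i hi
    have h1 : 0 < (P.map X1) (Metric.ball (z i) ε) :=
      hz i hi _ Metric.isOpen_ball (Metric.mem_ball_self hεpos)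
    rw [Measure.map_apply hX measurableSet_ball] at h1
    exact h1.ne'
  set b : ι → E2 := fun i => condMean P X1 (A i) with hb
  have hbz : ∀ i ∈ t, ‖b i - z i‖ ≤ ε := fun i hi =>
    condMean_close P X1 hXint hεpos rfl (hA0 i hi)
  set C : ℝ := ∑ i ∈ t, w i * (- Real.log (P (A i)).toReal) with hCdef
  set x' : E2 := ∑ i ∈ t, w i • b i with hx'def
  have hx'b : ∀ u : E2, (⟪u, x'⟫:ℝ) - cgfT P X1 u ≤ C := by
    intro u
    have e1 : (⟪u, x'⟫:ℝ) = ∑ i ∈ t, w i * ⟪u, b i⟫ := by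
      rw [hx'def, inner_sum]
      exact Finset.sum_congr rfl fun i _ => real_inner_smul_right u (b i) (w i)
    have e2 : ∑ i ∈ t, w i * ((⟪u, b i⟫:ℝ) - cgfT P X1 u)
        = (∑ i ∈ t, w i * ⟪u, b i⟫) - (∑ i ∈ t, w i) * cgfT P X1 u := by
      rw [Finset.sum_mul, ← Finset.sum_sub_distrib]
      exact Finset.sum_congr rfl fun i _ => by ring
    have e3 : (⟪u, x'⟫:ℝ) - cgfT P X1 u = ∑ i ∈ t, w i * ((⟪u, b i⟫:ℝ) - cgfT P X1 u) := by
      rw [e2, hw1, one_mul, e1]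
    rw [e3, hCdef]
    refine Finset.sum_le_sum fun i hi => ?_
    exact mul_le_mul_of_nonneg_left
      (condMean_key P X1 hX hXint hLap hIin (hAmeas i) (hA0 i hi) u) (hw0 i hi)
  have hxs : x = ∑ i ∈ t, w i • z i := by
    rw [← hxc, Finset.centerMass_eq_of_sum_1 _ _ hw1]
  have hx'x : ‖x' - x‖ ≤ ε := by
    have e0 : x' - x = ∑ i ∈ t, w i • (b i - z i) := by
      rw [hx'def, hxs, ← Finset.sum_sub_distrib]
      exact Finset.sum_congr rfl fun i _ => (smul_sub (w i) (b i) (z i)).symm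
    rw [e0]
    calc ‖∑ i ∈ t, w i • (b i - z i)‖ ≤ ∑ i ∈ t, ‖w i • (b i - z i)‖ := norm_sum_le _ _
    _ ≤ ∑ i ∈ t, w i * ε := by
        refine Finset.sum_le_sum fun i hi => ?_
        rw [norm_smul, Real.norm_eq_abs, abs_of_nonneg (hw0 i hi)]
        exact mul_le_mul_of_nonneg_left (hbz i hi) (hw0 i hi)
    _ = ε := by rw [← Finset.sum_mul, hw1, one_mul]
  have hx'r : ‖x'‖ < r := by
    have : ‖x'‖ ≤ ‖x' - x‖ + ‖x‖ := by
      calc ‖x'‖ = ‖(x' - x) + x‖ := by rw [sub_add_cancel]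
      _ ≤ ‖x' - x‖ + ‖x‖ := norm_add_le _ _
    rw [hεdef] at hx'x
    linarith
  -- a circle point with finite rate
  obtain ⟨τ, hτI, hτpos, hτr⟩ := exists_on_circle hx'r hr'
  set zpt : E2 := (1 - τ) • x' + τ • μv with hzpt
  have hz_bound : ∀ u : E2, (⟪u, zpt⟫:ℝ) - cgfT P X1 u ≤ |C| := by
    intro u
    rw [hzpt, inner_combo]
    have h1 := hx'b u
    have h2 := hmean0 u
    have h1' : (1 - τ) * ((⟪u, x'⟫:ℝ) - cgfT P X1 u) ≤ (1 - τ) * C :=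
      mul_le_mul_of_nonneg_left h1 (by linarith [hτI.2])
    have h2' : τ * ((⟪u, μv⟫:ℝ) - cgfT P X1 u) ≤ 0 :=
      mul_nonpos_of_nonneg_of_nonpos hτI.1 h2
    have h3 : (1 - τ) * C ≤ |C| := by
      rcases le_or_gt 0 C with hC0 | hC0
      · have h4 : (1 - τ) * C ≤ 1 * C :=
          mul_le_mul_of_nonneg_right (by linarith [hτI.1]) hC0
        rw [one_mul] at h4
        exact h4.trans (le_abs_self C)
      · have h4 : (1 - τ) * C ≤ 0 :=
          mul_nonpos_of_nonneg_of_nonpos (by linarith [hτI.2]) hC0.le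
        exact h4.trans (abs_nonneg C)
    linarith
  have hz_fin : rateI P X1 zpt ≤ ENNReal.ofReal |C| :=
    iSup_le fun u => ENNReal.ofReal_le_ofReal (hz_bound u)
  set ℓ0 : E2 := r⁻¹ • zpt with hℓ0def
  have hrℓ0 : r • ℓ0 = zpt := by
    rw [hℓ0def, smul_smul, mul_inv_cancel₀ hrpos.ne', one_smul]
  have hℓ0 : ‖ℓ0‖ = 1 := by
    rw [hℓ0def, norm_smul, Real.norm_eq_abs, abs_of_pos (inv_pos.2 hrpos), hτr]
    field_simp
  have hg0fin : rateI P X1 (r • ℓ0) ≠ ⊤ := by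
    rw [hrℓ0]
    exact ne_top_of_le_ne_top ENNReal.ofReal_ne_top hz_fin
  -- existence of a minimizer
  obtain ⟨ℓm, hℓm1, hℓmmin⟩ := exists_minOn_sphere (fun ℓ => rateI P X1 (r • ℓ))
    (fun bnd => sublevel_closed P X1 r bnd) ℓ0 hℓ0 hg0fin
  refine ⟨ℓm, ⟨hℓm1, hℓmmin⟩, ?_⟩
  rintro ℓ2 ⟨hℓ21, hℓ2min⟩
  by_contra hne
  -- both are minimizers with the same value m
  set m : ℝ≥0∞ := rateI P X1 (r • ℓm) with hmdef
  have hm2 : rateI P X1 (r • ℓ2) = m := le_antisymm (hℓ2min ℓm hℓm1) (hℓmmin ℓ2 hℓ21)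
  have hmfin : m ≠ ⊤ := fun h => hg0fin (top_le_iff.1 (h ▸ hℓmmin ℓ0 hℓ0))
  have hm0 : m ≠ 0 := by
    intro h0
    have e1 : r • ℓm = μv :=
      rate_zero_eq_mean P X1 hX hXint hLap hIin (rate_eq_zero_imp P X1 (hmdef ▸ h0))
    have e2 : r • ℓ2 = μv :=
      rate_zero_eq_mean P X1 hX hXint hLap hIin (rate_eq_zero_imp P X1 (hm2.trans h0))
    have : r • ℓ2 = r • ℓm := e2.trans e1.symm
    exact hne (smul_right_injective E2 hrpos.ne' this)
  -- midpoint has smaller norm and rate ≤ m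
  set wm : E2 := (1/2 : ℝ) • ℓm + (1/2 : ℝ) • ℓ2 with hwmdef
  have hwm_lt : ‖wm‖ < 1 := mid_norm_lt hℓm1 hℓ21 (fun h => hne h.symm)
  have hrw_le : rateI P X1 (r • wm) ≤ m := by
    have hsm : r • wm = (1/2:ℝ) • (r • ℓm) + (1/2:ℝ) • (r • ℓ2) := by
      rw [hwmdef, smul_add, smul_comm r (1/2:ℝ) ℓm, smul_comm r (1/2:ℝ) ℓ2]
    have hcombo := rate_combo P X1 (a := 1/2) (b := 1/2)
      (by norm_num) (by norm_num) (by norm_num) (r • ℓm) (r • ℓ2)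
    rw [hsm]
    refine hcombo.trans ?_
    rw [hm2, ← hmdef, ← add_mul, ← ENNReal.ofReal_add (by norm_num) (by norm_num)]
    norm_num
  have hrwnorm : ‖r • wm‖ < r := by
    rw [norm_smul, Real.norm_eq_abs, abs_of_pos hrpos]
    calc r * ‖wm‖ < r * 1 := mul_lt_mul_of_pos_left hwm_lt hrpos
    _ = r := mul_one r
  -- IVT: a circle point strictly between the midpoint and the mean
  obtain ⟨σ, hσI, hσpos, hσr⟩ := exists_on_circle hrwnorm hr'
  set zpt2 : E2 := (1 - σ) • (r • wm) + σ • μv with hzpt2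
  set ℓ3 : E2 := r⁻¹ • zpt2 with hℓ3def
  have hrℓ3 : r • ℓ3 = zpt2 := by
    rw [hℓ3def, smul_smul, mul_inv_cancel₀ hrpos.ne', one_smul]
  have hℓ31 : ‖ℓ3‖ = 1 := by
    rw [hℓ3def, norm_smul, Real.norm_eq_abs, abs_of_pos (inv_pos.2 hrpos), hσr]
    field_simp
  have hup : rateI P X1 zpt2
      ≤ ENNReal.ofReal (1 - σ) * rateI P X1 (r • wm) + ENNReal.ofReal σ * rateI P X1 μv := by
    rw [hzpt2]
    exact rate_combo P X1 (by linarith [hσI.2]) hσI.1 (by ring) (r • wm) μv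
  rw [hrate_mean, mul_zero, add_zero] at hup
  have hlt : rateI P X1 zpt2 < m := by
    refine lt_of_le_of_lt (hup.trans (mul_le_mul_of_nonneg_left hrw_le zero_le)) ?_
    have h1 : ENNReal.ofReal (1 - σ) * m < 1 * m :=
      ENNReal.mul_left_strictMono hm0 hmfin (ENNReal.ofReal_lt_one.2 (by linarith))
    rwa [one_mul] at h1
  have hge : m ≤ rateI P X1 zpt2 := by
    rw [← hrℓ3]
    exact hℓmmin ℓ3 hℓ31
  exact absurd hge (not_le.2 hlt)

end
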